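/- Let m ≥ 1 and let σ_j : ℤⁿ → ℂ for j = 1,...,m. Suppose the product symbol L(τ,ξ) = ∏_{j=1}^m (τ - σ_j(ξ)) satisfies: there exist C, M, R > 0 with |L(τ,ξ)| ≥ C|(τ,ξ)|^{-M} for all |τ|+|ξ| ≥ R. Suppose additionally each |σ_j(ξ)| ≤ K(1 + |ξ|)^ν for some K, ν > 0. Then each factor sequence {σ_j(ξ)} satisfies the generalized Siegel condition: there exist C', M', R' > 0 with |τ - σ_j(ξ)| ≥ C'|(τ,ξ)|^{-M'} for all |τ|+|ξ| ≥ R'. -/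

import Mathlib

open scoped BigOperators

/-- Euclidean norm of `ξ ∈ ℤⁿ`. -/
noncomputable def znorm {n : ℕ} (ξ : Fin n → ℤ) : ℝ :=
  Real.sqrt (∑ i, ((ξ i : ℝ)) ^ 2)

/-- Euclidean norm of `(τ, ξ) ∈ ℤ × ℤⁿ`. -/
noncomputable def pairNorm {n : ℕ} (τ : ℤ) (ξ : Fin n → ℤ) : ℝ :=
  Real.sqrt ((τ : ℝ) ^ 2 + ∑ i, ((ξ i : ℝ)) ^ 2)

/-- If the product symbol `L(τ,ξ) = ∏ⱼ (τ - σⱼ(ξ))` satisfies the Greenfield–Wallach lower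
bound and each `σⱼ` has polynomial growth `|σⱼ(ξ)| ≤ K(1 + |ξ|)^ν`, then each factor
sequence `{σⱼ(ξ)}` satisfies the generalized Siegel condition. -/
theorem factors_generalized_siegel {n : ℕ} {m : ℕ} (hm : 1 ≤ m)
    (σ : Fin m → (Fin n → ℤ) → ℂ) (C M R K ν : ℝ)
    (hC : 0 < C) (hM : 0 < M) (hR : 0 < R) (hK : 0 < K) (hν : 0 < ν)
    (hσ : ∀ (j : Fin m) (ξ : Fin n → ℤ),
      ‖σ j ξ‖ ≤ K * (1 + znorm ξ) ^ ν)
    (hL : ∀ (τ : ℤ) (ξ : Fin n → ℤ), R ≤ |(τ : ℝ)| + znorm ξ →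
      C * pairNorm τ ξ ^ (-M) ≤ ∏ j, ‖(τ : ℂ) - σ j ξ‖) :
    ∀ j : Fin m, ∃ C' M' R' : ℝ, 0 < C' ∧ 0 < M' ∧ 0 < R' ∧
      ∀ (τ : ℤ) (ξ : Fin n → ℤ), R' ≤ |(τ : ℝ)| + znorm ξ →
        C' * pairNorm τ ξ ^ (-M') ≤ ‖(τ : ℂ) - σ j ξ‖ := by
  intro j
  set ν' : ℝ := max 1 ν with hν'def
  have hν'1 : (1:ℝ) ≤ ν' := le_max_left _ _
  set B : ℝ := 1 + K * (2:ℝ) ^ ν with hBdef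
  have h2ν : (0:ℝ) < (2:ℝ) ^ ν := Real.rpow_pos_of_pos (by norm_num) ν
  have hB : (0:ℝ) < B := by positivity
  refine ⟨C / B ^ (m - 1), M + ν' * (m - 1 : ℕ), max R 2, by positivity, ?_, ?_, ?_⟩
  · have : (0:ℝ) ≤ ν' * (m - 1 : ℕ) := by positivity
    linarith
  · exact lt_of_lt_of_le hR (le_max_left _ _)
  intro τ ξ hle
  set P : ℝ := pairNorm τ ξ with hPdef
  have hS : (0:ℝ) ≤ ∑ i, ((ξ i : ℝ)) ^ 2 := by positivity
  have hτP : |(τ : ℝ)| ≤ P := by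
    rw [hPdef, pairNorm, ← Real.sqrt_sq_eq_abs]
    exact Real.sqrt_le_sqrt (by linarith)
  have hzP : znorm ξ ≤ P := by
    rw [hPdef, pairNorm, znorm]
    exact Real.sqrt_le_sqrt (by nlinarith [sq_nonneg ((τ:ℝ))])
  have hP1 : (1:ℝ) ≤ P := by
    have h2 : (2:ℝ) ≤ |(τ : ℝ)| + znorm ξ := le_trans (le_max_right R 2) hle
    linarith
  have hP0 : (0:ℝ) < P := lt_of_lt_of_le one_pos hP1
  have hz0 : (0:ℝ) ≤ znorm ξ := Real.sqrt_nonneg _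
  -- factor bound
  have hfac : ∀ k : Fin m, ‖(τ : ℂ) - σ k ξ‖ ≤ B * P ^ ν' := by
    intro k
    have h1 : ‖(τ : ℂ) - σ k ξ‖ ≤ |(τ : ℝ)| + ‖σ k ξ‖ := by
      have := norm_sub_le ((τ : ℂ)) (σ k ξ)
      simpa using this
    have h2 : (1 + znorm ξ) ^ ν ≤ (2 * P) ^ ν :=
      Real.rpow_le_rpow (by linarith) (by linarith) hν.le
    have h3 : ((2:ℝ) * P) ^ ν = (2:ℝ) ^ ν * P ^ ν := Real.mul_rpow (by norm_num) hP0.le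
    have h4 : P ^ ν ≤ P ^ ν' := Real.rpow_le_rpow_of_exponent_le hP1 (le_max_right 1 ν)
    have h5 : P ≤ P ^ ν' := by
      nth_rewrite 1 [← Real.rpow_one P]
      exact Real.rpow_le_rpow_of_exponent_le hP1 hν'1
    have h6 := hσ k ξ
    have hPν : (0:ℝ) < P ^ ν := Real.rpow_pos_of_pos hP0 ν
    calc ‖(τ : ℂ) - σ k ξ‖ ≤ |(τ : ℝ)| + ‖σ k ξ‖ := h1
      _ ≤ P + K * (1 + znorm ξ) ^ ν := by linarith
      _ ≤ P + K * ((2:ℝ) ^ ν * P ^ ν) := by nlinarith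
      _ ≤ P ^ ν' + K * ((2:ℝ) ^ ν * P ^ ν') := by
            have h7 : K * ((2:ℝ) ^ ν * P ^ ν) ≤ K * ((2:ℝ) ^ ν * P ^ ν') := by
              gcongr
            linarith
      _ = B * P ^ ν' := by rw [hBdef]; ring
  have hprod := hL τ ξ (le_trans (le_max_left R 2) hle)
  have hsplit : (∏ k, ‖(τ : ℂ) - σ k ξ‖)
      = ‖(τ : ℂ) - σ j ξ‖ *
        ∏ k ∈ Finset.univ.erase j, ‖(τ : ℂ) - σ k ξ‖ :=
    (Finset.mul_prod_erase _ _ (Finset.mem_univ j)).symm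
  have hPν' : (0:ℝ) < P ^ ν' := Real.rpow_pos_of_pos hP0 ν'
  have hrest : (∏ k ∈ Finset.univ.erase j, ‖(τ : ℂ) - σ k ξ‖)
      ≤ (B * P ^ ν') ^ (m - 1) := by
    have hcard : (Finset.univ.erase j).card = m - 1 := by
      simp [Finset.card_erase_of_mem]
    calc (∏ k ∈ Finset.univ.erase j, ‖(τ : ℂ) - σ k ξ‖)
        ≤ ∏ _k ∈ Finset.univ.erase j, (B * P ^ ν') :=
          Finset.prod_le_prod (fun k _ => (norm_nonneg _)) (fun k _ => hfac k)
      _ = (B * P ^ ν') ^ (m - 1) := by rw [Finset.prod_const, hcard]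
  have hD : (0:ℝ) < (B * P ^ ν') ^ (m - 1) := by positivity
  have hmain : C * P ^ (-M) ≤ ‖(τ : ℂ) - σ j ξ‖ * (B * P ^ ν') ^ (m - 1) := by
    calc C * P ^ (-M) ≤ ∏ k, ‖(τ : ℂ) - σ k ξ‖ := hprod
      _ = ‖(τ : ℂ) - σ j ξ‖ *
          ∏ k ∈ Finset.univ.erase j, ‖(τ : ℂ) - σ k ξ‖ := hsplit
      _ ≤ ‖(τ : ℂ) - σ j ξ‖ * (B * P ^ ν') ^ (m - 1) :=
          mul_le_mul_of_nonneg_left hrest (norm_nonneg _)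
  have key : (C / B ^ (m - 1)) * P ^ (-(M + ν' * (m - 1 : ℕ))) * ((B * P ^ ν') ^ (m - 1))
      = C * P ^ (-M) := by
    have hBne : (B:ℝ) ^ (m - 1) ≠ 0 := pow_ne_zero _ hB.ne'
    have h1 : ((B * P ^ ν') ^ (m - 1) : ℝ) = B ^ (m - 1) * P ^ (ν' * ((m - 1 : ℕ) : ℝ)) := by
      rw [mul_pow, ← Real.rpow_natCast (P ^ ν') (m - 1), ← Real.rpow_mul hP0.le]
    rw [h1,
      show (-(M + ν' * ((m - 1 : ℕ) : ℝ))) = -M + -(ν' * ((m - 1 : ℕ) : ℝ)) by ring,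
      Real.rpow_add hP0]
    have hPe : P ^ (-(ν' * ((m - 1 : ℕ) : ℝ))) * P ^ (ν' * ((m - 1 : ℕ) : ℝ)) = 1 := by
      rw [← Real.rpow_add hP0]; simp
    calc C / B ^ (m - 1) * (P ^ (-M) * P ^ (-(ν' * ((m - 1 : ℕ) : ℝ))))
          * (B ^ (m - 1) * P ^ (ν' * ((m - 1 : ℕ) : ℝ)))
        = (C / B ^ (m - 1) * B ^ (m - 1)) * P ^ (-M)
          * (P ^ (-(ν' * ((m - 1 : ℕ) : ℝ))) * P ^ (ν' * ((m - 1 : ℕ) : ℝ))) := by ring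
      _ = C * P ^ (-M) := by rw [hPe, div_mul_cancel₀ _ hBne, mul_one]
  have hmain2 : (C / B ^ (m - 1)) * P ^ (-(M + ν' * (m - 1 : ℕ))) * ((B * P ^ ν') ^ (m - 1))
      ≤ ‖(τ : ℂ) - σ j ξ‖ * ((B * P ^ ν') ^ (m - 1)) := by
    rw [key]; exact hmain
  exact le_of_mul_le_mul_right hmain2 hD
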